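/- If r ≡ 0, then any global minimizer of E over the product of simplices X, after a non-energy-increasing rounding, gives a binary point achieving the minimum discrete energy E*; i.e., the continuous relaxation min_{x∈X} E(x) is tight: its optimal value equals min over X ∩ {0,1}^{nd} of E. -/
import Mathlib


open scoped RealInnerProductSpace

/-- Tightness of the unregularized relaxation: a global minimizer of `E` over
the product of simplices, followed by a non-energy-increasing rounding, attains
the minimum discrete energy, and the continuous and discrete optima agree. -/
theorem unregularized_relaxation_tight {n d : ℕ}
    {P : EuclideanSpace ℝ (Fin n × Fin d) →L[ℝ] EuclideanSpace ℝ (Fin n × Fin d)}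
    (hPsymm : ∀ a b, ⟪P a, b⟫ = ⟪a, P b⟫)
    (u : EuclideanSpace ℝ (Fin n × Fin d))
    {xstar y : EuclideanSpace ℝ (Fin n × Fin d)} {Estar : ℝ}
    (hxX : (∀ i s, 0 ≤ xstar (i, s)) ∧ ∀ i, ∑ s, xstar (i, s) = 1)
    (hxmin : ∀ z : EuclideanSpace ℝ (Fin n × Fin d),
      ((∀ i s, 0 ≤ z (i, s)) ∧ ∀ i, ∑ s, z (i, s) = 1) →
        (1 : ℝ) / 2 * ⟪xstar, P xstar⟫ + ⟪u, xstar⟫ ≤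
          (1 : ℝ) / 2 * ⟪z, P z⟫ + ⟪u, z⟫)
    (hybin : (∀ i s, y (i, s) = 0 ∨ y (i, s) = 1) ∧ ∀ i, ∑ s, y (i, s) = 1)
    (hyE : (1 : ℝ) / 2 * ⟪y, P y⟫ + ⟪u, y⟫ ≤
      (1 : ℝ) / 2 * ⟪xstar, P xstar⟫ + ⟪u, xstar⟫)
    (hEstar : IsLeast {v : ℝ | ∃ z : EuclideanSpace ℝ (Fin n × Fin d),
      ((∀ i s, z (i, s) = 0 ∨ z (i, s) = 1) ∧ ∀ i, ∑ s, z (i, s) = 1) ∧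
        v = (1 : ℝ) / 2 * ⟪z, P z⟫ + ⟪u, z⟫} Estar) :
    (1 : ℝ) / 2 * ⟪y, P y⟫ + ⟪u, y⟫ = Estar ∧
    (1 : ℝ) / 2 * ⟪xstar, P xstar⟫ + ⟪u, xstar⟫ = Estar := by
  obtain ⟨hElb, hEub⟩ := hEstar
  obtain ⟨z, hz, hzE⟩ := hElb
  have hzX : (∀ i s, 0 ≤ z (i, s)) ∧ ∀ i, ∑ s, z (i, s) = 1 :=
    ⟨fun i s => by rcases hz.1 i s with h | h <;> simp [h], hz.2⟩
  have h1 : (1 : ℝ) / 2 * ⟪xstar, P xstar⟫ + ⟪u, xstar⟫ ≤ Estar := by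
    rw [hzE]; exact hxmin z hzX
  have h2 : Estar ≤ (1 : ℝ) / 2 * ⟪y, P y⟫ + ⟪u, y⟫ :=
    hEub ⟨y, hybin, rfl⟩
  constructor <;> linarith
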